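/- arXiv:2510.26712 — 6 statements merged into one kernel-verified Lean document; each statement's English description precedes it below -/
import Mathlib

section
/- (Proposition 2) Let ℐ = ⟦C, Δ⟧ ⊂ ℝ^{l×p} be an interval matrix and ℳ = ⟨M_C; G^{(1)}, …, G^{(g)}⟩ ⊂ ℝ^{p×q} a matrix zonotope. Set F = Δ(|M_C| + Σ_{j=1}^{g} |G^{(j)}|) ∈ ℝ^{l×q}. Then for every N ∈ ℐ and every M ∈ ℳ, the product NM can be written as NM = C M_C + Σ_{i=1}^{g} β_i C G^{(i)} + E for some scalars β_i with |β_i| ≤ 1 and some matrix E with |E| ≤ F entrywise. In other words, the exact set product ℐℳ is contained in the matrix zonotope with center C M_C, generators C G^{(1)}, …, C G^{(g)}, and additional generators given by the entrywise decomposition of F. -/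
/-- Entrywise absolute value of a matrix. -/
def eabs {p q : Type*} (M : Matrix p q ℝ) : Matrix p q ℝ := fun i j => |M i j|

/-- The matrix zonotope with center `MC` and generators `G 0, …, G (g-1)`. -/
def matZonotope {p q g : ℕ} (MC : Matrix (Fin p) (Fin q) ℝ)
    (G : Fin g → Matrix (Fin p) (Fin q) ℝ) : Set (Matrix (Fin p) (Fin q) ℝ) :=
  {M | ∃ β : Fin g → ℝ, (∀ i, |β i| ≤ 1) ∧ M = MC + ∑ i, β i • G i}

/-- (Proposition 2) Let `ℐ = ⟦C, Δ⟧` be an interval matrix and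
`ℳ = ⟨MC; G⁽¹⁾, …, G⁽ᵍ⁾⟩` a matrix zonotope, and set
`F = Δ(|MC| + Σⱼ |G⁽ʲ⁾|)`. Then for every `N ∈ ℐ` and every `M ∈ ℳ`, the product
`NM` can be written as `NM = C·MC + Σᵢ βᵢ C G⁽ⁱ⁾ + E` with `|βᵢ| ≤ 1` and
`|E| ≤ F` entrywise; i.e. `ℐℳ ⊆ 𝕋_ℐ(ℳ)`. -/
theorem interval_times_zonotope_overapprox {l p q g : ℕ}
    (C Δ : Matrix (Fin l) (Fin p) ℝ) (hΔ : ∀ i j, 0 ≤ Δ i j)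
    (MC : Matrix (Fin p) (Fin q) ℝ) (G : Fin g → Matrix (Fin p) (Fin q) ℝ)
    (F : Matrix (Fin l) (Fin q) ℝ)
    (hF : F = Δ * (eabs MC + ∑ j, eabs (G j)))
    (N : Matrix (Fin l) (Fin p) ℝ) (hN : ∀ i j, |N i j - C i j| ≤ Δ i j)
    (M : Matrix (Fin p) (Fin q) ℝ) (hM : M ∈ matZonotope MC G) :
    ∃ (β : Fin g → ℝ) (E : Matrix (Fin l) (Fin q) ℝ),
      (∀ i, |β i| ≤ 1) ∧ (∀ i j, |E i j| ≤ F i j) ∧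
      N * M = C * MC + (∑ i, β i • (C * G i)) + E := by
  obtain ⟨β, hβ, hMeq⟩ := hM
  refine ⟨β, (N - C) * M, hβ, ?_, ?_⟩
  · intro i j
    subst hF
    simp only [Matrix.mul_apply]
    calc |∑ k, (N - C) i k * M k j| ≤ ∑ k, |(N - C) i k * M k j| :=
          Finset.abs_sum_le_sum_abs _ _
      _ ≤ ∑ k, Δ i k * ((eabs MC + ∑ j', eabs (G j')) k j) := by
          apply Finset.sum_le_sum
          intro k _
          rw [abs_mul]
          apply mul_le_mul (hN i k) ?_ (abs_nonneg _) (hΔ i k)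
          have : M k j = MC k j + ∑ i', β i' * G i' k j := by
            rw [hMeq]; simp [Matrix.sum_apply]
          rw [this]
          calc |MC k j + ∑ i', β i' * G i' k j|
              ≤ |MC k j| + |∑ i', β i' * G i' k j| := abs_add_le _ _
            _ ≤ |MC k j| + ∑ i', |G i' k j| := by
                gcongr
                calc |∑ i', β i' * G i' k j| ≤ ∑ i', |β i' * G i' k j| :=
                      Finset.abs_sum_le_sum_abs _ _
                  _ ≤ ∑ i', |G i' k j| := by
                      apply Finset.sum_le_sum
                      intro i' _
                      rw [abs_mul]
                      exact mul_le_of_le_one_left (abs_nonneg _) (hβ i')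
            _ = (eabs MC + ∑ j', eabs (G j')) k j := by
                simp [eabs, Matrix.sum_apply]
  · rw [hMeq]
    simp only [Matrix.mul_add, Matrix.sub_mul, Matrix.mul_sum, Matrix.mul_smul, smul_sub, Finset.sum_sub_distrib]
    abel
end

section
/- (Lemma 1 combined with the iterated over-approximation property) Let Â_K ∈ ℝ^{n×n}, let Δ_K ∈ ℝ^{n×n} and Δ_S ∈ ℝ^{n×(n+m)} be entrywise nonnegative, and define matrices F_j ∈ ℝ^{n×(n+m)} by F_0 = Δ_S and F_{j+1} = Δ_K Σ_{i=0}^{j} |Â_K^{j−i}| F_i for j ≥ 0, and set R_j = Σ_{i=0}^{j} |Â_K^{j−i}| F_i. Then for every j ∈ ℕ, every A ∈ ℝ^{n×n} with |A − Â_K| ≤ Δ_K entrywise, and every D ∈ ℝ^{n×(n+m)} with |D| ≤ Δ_S entrywise, one has |A^j D| ≤ R_j entrywise. -/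
lemma entry_abs_mul_le {p q r : Type*} [Fintype q]
    (M M' : Matrix p q ℝ) (N N' : Matrix q r ℝ)
    (hM : ∀ i l, |M i l| ≤ M' i l) (hN : ∀ l k, |N l k| ≤ N' l k) :
    ∀ i k, |(M * N) i k| ≤ (M' * N') i k := by
  intro i k
  rw [Matrix.mul_apply, Matrix.mul_apply]
  calc |∑ l, M i l * N l k| ≤ ∑ l, |M i l * N l k| := Finset.abs_sum_le_sum_abs _ _
    _ ≤ ∑ l, M' i l * N' l k := by
        apply Finset.sum_le_sum
        intro l _
        rw [abs_mul]
        exact mul_le_mul (hM i l) (hN l k) (abs_nonneg _)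
          (le_trans (abs_nonneg _) (hM i l))

/-- (Lemma 1 combined with the iterated over-approximation property)
With `F 0 = Δ_S`, `F (j+1) = Δ_K Σ_{i=0}^{j} |Ahat_K^{j−i}| F i` and
`R j = Σ_{i=0}^{j} |Ahat_K^{j−i}| F i`, for every `j`, every `A` with
`|A − Ahat_K| ≤ Δ_K` entrywise and every `D` with `|D| ≤ Δ_S` entrywise, one has
`|A^j D| ≤ R j` entrywise. -/
theorem iterated_overapprox_bound {n m : ℕ}
    (AhatK ΔK : Matrix (Fin n) (Fin n) ℝ) (ΔS : Matrix (Fin n) (Fin (n + m)) ℝ)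
    (hΔK : ∀ i j, 0 ≤ ΔK i j) (hΔS : ∀ i j, 0 ≤ ΔS i j)
    (F : ℕ → Matrix (Fin n) (Fin (n + m)) ℝ)
    (hF0 : F 0 = ΔS)
    (hFs : ∀ j, F (j + 1) = ΔK * ∑ i ∈ Finset.range (j + 1), eabs (AhatK ^ (j - i)) * F i)
    (R : ℕ → Matrix (Fin n) (Fin (n + m)) ℝ)
    (hR : ∀ j, R j = ∑ i ∈ Finset.range (j + 1), eabs (AhatK ^ (j - i)) * F i) :
    ∀ (j : ℕ) (A : Matrix (Fin n) (Fin n) ℝ) (D : Matrix (Fin n) (Fin (n + m)) ℝ),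
      (∀ i k, |A i k - AhatK i k| ≤ ΔK i k) → (∀ i k, |D i k| ≤ ΔS i k) →
      ∀ i k, |(A ^ j * D) i k| ≤ R j i k := by
  intro j A D hA hD
  -- error terms
  set E : ℕ → Matrix (Fin n) (Fin (n + m)) ℝ :=
    fun i => Nat.rec D (fun p _ => (A - AhatK) * (A ^ p * D)) i with hE
  have hE0 : E 0 = D := rfl
  have hEs : ∀ p, E (p + 1) = (A - AhatK) * (A ^ p * D) := fun p => rfl
  -- decomposition
  have decomp : ∀ j, A ^ j * D = ∑ i ∈ Finset.range (j + 1), AhatK ^ (j - i) * E i := by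
    intro j
    induction j with
    | zero => simp [hE0]
    | succ j ih =>
      have h1 : A ^ (j + 1) * D = AhatK * (A ^ j * D) + E (j + 1) := by
        rw [hEs, pow_succ', Matrix.mul_assoc, Matrix.sub_mul]
        abel
      rw [h1, ih, Matrix.mul_sum,
        Finset.sum_range_succ (fun i => AhatK ^ (j + 1 - i) * E i) (j + 1)]
      simp only [Nat.sub_self, pow_zero, Matrix.one_mul]
      congr 1
      apply Finset.sum_congr rfl
      intro i hi
      rw [← Matrix.mul_assoc, ← pow_succ']
      congr 2
      have := Finset.mem_range.mp hi
      omega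
  -- main strong induction
  induction j using Nat.strong_induction_on with
  | _ j ih =>
    have hEF : ∀ p ≤ j, ∀ i k, |E p i k| ≤ F p i k := by
      intro p hp i k
      cases p with
      | zero => rw [hE0, hF0]; exact hD i k
      | succ p =>
        rw [hEs, hFs, ← hR]
        exact entry_abs_mul_le _ _ _ _ (fun i l => hA i l) (ih p (by omega)) i k
    intro i k
    rw [decomp j, hR j]
    simp only [Matrix.sum_apply]
    calc |∑ p ∈ Finset.range (j + 1), (AhatK ^ (j - p) * E p) i k|
        ≤ ∑ p ∈ Finset.range (j + 1), |(AhatK ^ (j - p) * E p) i k| :=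
          Finset.abs_sum_le_sum_abs _ _
      _ ≤ ∑ p ∈ Finset.range (j + 1), (eabs (AhatK ^ (j - p)) * F p) i k := by
          apply Finset.sum_le_sum
          intro p hp
          exact entry_abs_mul_le _ _ _ _ (fun i l => le_refl |_|)
            (hEF p (by simpa using Nat.lt_succ_iff.mp (Finset.mem_range.mp hp))) i k
      _ = _ := rfl
end

section
/- (Lemma 2) Let Â_K ∈ ℝ^{n×n}, let Δ_K ∈ ℝ^{n×n} and Δ_S ∈ ℝ^{n×(n+m)} be entrywise nonnegative, and define F_j ∈ ℝ^{n×(n+m)} by F_0 = Δ_S and F_{j+1} = Δ_K Σ_{i=0}^{j} |Â_K^{j−i}| F_i for j ≥ 0. Define P_j ∈ ℝ^{n×n} by P_1 = I_n and P_{j+1} = |Â_K^{j}| + Σ_{h=1}^{j} P_h Δ_K |Â_K^{j−h}| for j ≥ 1. Then F_j = Δ_K P_j Δ_S for all j ≥ 1. -/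
variable {n : ℕ}

lemma icc_sum {M : Type*} [AddCommMonoid M] (f : ℕ → M) (N : ℕ) :
    ∑ h ∈ Finset.Icc 1 N, f h = ∑ k ∈ Finset.range N, f (k + 1) := by
  rw [← Finset.Ico_add_one_right_eq_Icc, Finset.sum_Ico_eq_sum_range]
  simp [add_comm]

lemma swap_sum (ΔK : Matrix (Fin n) (Fin n) ℝ)
    (X P : ℕ → Matrix (Fin n) (Fin n) ℝ) (hX0 : X 0 = 1) (hP1 : P 1 = 1)
    (hPs : ∀ j, 1 ≤ j → P (j+1) = X j + ∑ h ∈ Finset.Icc 1 j, P h * ΔK * X (j - h)) :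
    ∀ j, 1 ≤ j → ∑ h ∈ Finset.Icc 1 j, P h * ΔK * X (j - h)
      = ∑ h ∈ Finset.Icc 1 j, X (j - h) * ΔK * P h := by
  intro j
  induction j using Nat.strong_induction_on with
  | _ j IH =>
    intro hj
    cases j with
    | zero => omega
    | succ j =>
      rcases Nat.eq_zero_or_pos j with rfl | hj1
      · simp [hP1, hX0]
      have key : ∀ Q : ℕ → ℕ → Matrix (Fin n) (Fin n) ℝ,
          ∑ h ∈ Finset.Icc 1 (j+1), Q h (j+1-h)
            = ∑ k ∈ Finset.range j, Q (k+2) (j-1-k) + Q 1 j := by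
        intro Q
        rw [icc_sum, Finset.sum_range_succ']
        congr 1
        · apply Finset.sum_congr rfl; intro k hk
          have h1 : j+1-(k+1+1) = j-1-k := by omega
          rw [h1]
      rw [key (fun a b => P a * ΔK * X b), key (fun a b => X b * ΔK * P a)]
      have expand : ∀ k ∈ Finset.range j,
          P (k+2) = X (k+1) + ∑ l ∈ Finset.Icc 1 (k+1), X (k+1-l) * ΔK * P l := by
        intro k hk
        rw [hPs (k+1) (by omega), IH (k+1) (by simp at hk; omega) (by omega)]
      -- LHS double sum expansion
      have L : ∑ k ∈ Finset.range j, P (k+2) * ΔK * X (j-1-k)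
          = ∑ k ∈ Finset.range j, X (k+1) * ΔK * X (j-1-k)
            + ∑ k ∈ Finset.range j, ∑ l ∈ Finset.Icc 1 (k+1),
                X (k+1-l) * ΔK * P l * ΔK * X (j-1-k) := by
        rw [← Finset.sum_add_distrib]
        apply Finset.sum_congr rfl
        intro k hk
        rw [expand k hk, add_mul, add_mul, Finset.sum_mul, Finset.sum_mul]
      have R : ∑ k ∈ Finset.range j, X (j-1-k) * ΔK * P (k+2)
          = ∑ k ∈ Finset.range j, X (j-1-k) * ΔK * X (k+1)
            + ∑ k ∈ Finset.range j, ∑ l ∈ Finset.Icc 1 (k+1),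
                X (j-1-k) * ΔK * P l * ΔK * X (k+1-l) := by
        rw [← Finset.sum_add_distrib]
        apply Finset.sum_congr rfl
        intro k hk
        rw [hPs (k+1) (by omega), mul_add, Finset.mul_sum]
        congr 1
        apply Finset.sum_congr rfl
        intro l hl
        noncomm_ring
      rw [L, R]
      have single : ∑ k ∈ Finset.range j, X (k+1) * ΔK * X (j-1-k) + P 1 * ΔK * X j
          = ∑ k ∈ Finset.range j, X (j-1-k) * ΔK * X (k+1) + X j * ΔK * P 1 := by
        rw [hP1, mul_one, one_mul]
        have e1 : ∑ a ∈ Finset.range (j+1), X a * ΔK * X (j-a)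
            = ∑ k ∈ Finset.range j, X (k+1) * ΔK * X (j-1-k) + ΔK * X j := by
          rw [Finset.sum_range_succ']
          congr 1
          · apply Finset.sum_congr rfl; intro k hk
            have h1 : j - (k+1) = j-1-k := by omega
            rw [h1]
          · rw [hX0, one_mul]
            congr 1
        have e2 : ∑ a ∈ Finset.range (j+1), X (j-a) * ΔK * X a
            = ∑ k ∈ Finset.range j, X (j-1-k) * ΔK * X (k+1) + X j * ΔK := by
          rw [Finset.sum_range_succ']
          congr 1
          · apply Finset.sum_congr rfl; intro k hk
            have h1 : j - (k+1) = j-1-k := by omega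
            rw [h1]
          · rw [Nat.sub_zero, hX0, mul_one]
        rw [← e1, ← e2, ← Finset.sum_range_reflect]
        apply Finset.sum_congr rfl
        intro a ha
        simp only [Finset.mem_range] at ha
        have h1 : j + 1 - 1 - a = j - a := by omega
        have h2 : j - (j - a) = a := by omega
        rw [h1, h2]
      have double : ∑ k ∈ Finset.range j, ∑ l ∈ Finset.Icc 1 (k+1),
              X (k+1-l) * ΔK * P l * ΔK * X (j-1-k)
          = ∑ k ∈ Finset.range j, ∑ l ∈ Finset.Icc 1 (k+1),
              X (j-1-k) * ΔK * P l * ΔK * X (k+1-l) := by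
        rw [Finset.sum_sigma', Finset.sum_sigma']
        apply Finset.sum_nbij' (fun p => ⟨(j-1-p.1)+(p.2-1), p.2⟩)
          (fun p => ⟨(j-1-p.1)+(p.2-1), p.2⟩)
        · rintro ⟨k, l⟩ hm
          simp only [Finset.mem_sigma, Finset.mem_range, Finset.mem_Icc] at hm ⊢
          omega
        · rintro ⟨k, l⟩ hm
          simp only [Finset.mem_sigma, Finset.mem_range, Finset.mem_Icc] at hm ⊢
          omega
        · rintro ⟨k, l⟩ hm
          simp only [Finset.mem_sigma, Finset.mem_range, Finset.mem_Icc] at hm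
          simp only [Sigma.mk.inj_iff, heq_eq_eq, and_true]
          omega
        · rintro ⟨k, l⟩ hm
          simp only [Finset.mem_sigma, Finset.mem_range, Finset.mem_Icc] at hm
          simp only [Sigma.mk.inj_iff, heq_eq_eq, and_true]
          omega
        · rintro ⟨k, l⟩ hm
          simp only [Finset.mem_sigma, Finset.mem_range, Finset.mem_Icc] at hm
          have h1 : j - 1 - ((j-1-k)+(l-1)) = k+1-l := by omega
          have h2 : (j-1-k)+(l-1)+1-l = j-1-k := by omega
          simp only [h1, h2]
      rw [double, add_right_comm, single, add_right_comm]

/-- (Lemma 2) With `F 0 = Δ_S`, `F (j+1) = Δ_K Σ_{i=0}^{j} |Ahat_K^{j−i}| F i`,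
`P 1 = I` and `P (j+1) = |Ahat_K^{j}| + Σ_{h=1}^{j} P h Δ_K |Ahat_K^{j−h}|` for `j ≥ 1`,
one has `F j = Δ_K P j Δ_S` for all `j ≥ 1`. -/
theorem lemma2_F_eq_DeltaK_P_DeltaS {n m : ℕ}
    (AhatK ΔK : Matrix (Fin n) (Fin n) ℝ) (ΔS : Matrix (Fin n) (Fin (n + m)) ℝ)
    (hΔK : ∀ i j, 0 ≤ ΔK i j) (hΔS : ∀ i j, 0 ≤ ΔS i j)
    (F : ℕ → Matrix (Fin n) (Fin (n + m)) ℝ)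
    (hF0 : F 0 = ΔS)
    (hFs : ∀ j, F (j + 1) = ΔK * ∑ i ∈ Finset.range (j + 1), eabs (AhatK ^ (j - i)) * F i)
    (P : ℕ → Matrix (Fin n) (Fin n) ℝ)
    (hP1 : P 1 = 1)
    (hPs : ∀ j, 1 ≤ j →
      P (j + 1) = eabs (AhatK ^ j) + ∑ h ∈ Finset.Icc 1 j, P h * ΔK * eabs (AhatK ^ (j - h))) :
    ∀ j, 1 ≤ j → F j = ΔK * P j * ΔS := by
  have hX0 : eabs (AhatK ^ 0) = 1 := by
    ext i j
    simp only [pow_zero, eabs, Matrix.one_apply]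
    split <;> simp
  have hswap : ∀ j, 1 ≤ j →
      ∑ h ∈ Finset.Icc 1 j, P h * ΔK * eabs (AhatK ^ (j - h))
        = ∑ h ∈ Finset.Icc 1 j, eabs (AhatK ^ (j - h)) * ΔK * P h :=
    swap_sum ΔK (fun p => eabs (AhatK ^ p)) P hX0 hP1 hPs
  intro j
  induction j using Nat.strong_induction_on with
  | _ j IH =>
    intro hj
    cases j with
    | zero => omega
    | succ j =>
      rcases Nat.eq_zero_or_pos j with rfl | hj1
      · rw [hFs 0, Finset.sum_range_one, hF0, hP1, Nat.sub_zero, hX0, Matrix.one_mul, Matrix.mul_one]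
      · rw [hFs j, hPs j hj1, hswap j hj1]
        rw [Finset.sum_range_succ', hF0]
        have e1 : ∀ k ∈ Finset.range j, eabs (AhatK ^ (j - (k+1))) * F (k+1)
            = eabs (AhatK ^ (j-1-k)) * ΔK * P (k+1) * ΔS := by
          intro k hk
          simp only [Finset.mem_range] at hk
          have h1 : j - (k+1) = j-1-k := by omega
          rw [h1, IH (k+1) (by omega) (by omega)]
          simp only [Matrix.mul_assoc]
        rw [Finset.sum_congr rfl e1, Nat.sub_zero]
        rw [icc_sum (fun h => eabs (AhatK ^ (j-h)) * ΔK * P h) j]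
        simp only [Matrix.mul_add, Matrix.add_mul, Matrix.mul_sum, Matrix.sum_mul,
          Matrix.mul_assoc]
        have e2 : ∑ a ∈ Finset.range j, ΔK * (eabs (AhatK ^ (j-1-a)) * (ΔK * (P (a+1) * ΔS)))
            = ∑ x ∈ Finset.range j, ΔK * (eabs (AhatK ^ (j-(x+1))) * (ΔK * (P (x+1) * ΔS))) := by
          apply Finset.sum_congr rfl
          intro k hk
          have h1 : j - (k+1) = j-1-k := by omega
          rw [h1]
        rw [e2]
        exact add_comm _ _
end

section
/- Let Δ ∈ ℝ^{p×q} be entrywise nonnegative and ξ ∈ ℝ^{q}. Then {Eξ : E ∈ ℝ^{p×q}, |E| ≤ Δ entrywise} = {v ∈ ℝ^{p} : |v| ≤ Δ|ξ| entrywise}. In particular, for every v with |v| ≤ Δ|ξ| entrywise there exists E with |E| ≤ Δ entrywise and Eξ = v. -/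
lemma abs_sign_le_one (x : ℝ) : |Real.sign x| ≤ 1 := by
  rcases lt_trichotomy x 0 with h | h | h
  · simp [Real.sign_of_neg h]
  · simp [h, Real.sign_zero]
  · simp [Real.sign_of_pos h]

lemma sign_mul_self_eq_abs (x : ℝ) : Real.sign x * x = |x| := by
  rcases lt_trichotomy x 0 with h | h | h
  · rw [Real.sign_of_neg h, abs_of_neg h]; ring
  · simp [h]
  · rw [Real.sign_of_pos h, abs_of_pos h]; ring

/-- For `Δ ≥ 0` entrywise and a vector `ξ`, the set `{Eξ : |E| ≤ Δ entrywise}` equals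
the set `{v : |v| ≤ Δ|ξ| entrywise}`. -/
theorem interval_matrix_image_of_vector {p q : ℕ}
    (Δ : Matrix (Fin p) (Fin q) ℝ) (hΔ : ∀ i j, 0 ≤ Δ i j) (ξ : Fin q → ℝ) :
    {v : Fin p → ℝ | ∃ E : Matrix (Fin p) (Fin q) ℝ,
        (∀ i j, |E i j| ≤ Δ i j) ∧ v = E.mulVec ξ}
      = {v : Fin p → ℝ | ∀ i, |v i| ≤ (Δ.mulVec fun j => |ξ j|) i} := by
  ext v
  simp only [Set.mem_setOf_eq]
  constructor
  · rintro ⟨E, hE, rfl⟩ i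
    simp only [Matrix.mulVec, dotProduct]
    calc |∑ j, E i j * ξ j| ≤ ∑ j, |E i j * ξ j| := Finset.abs_sum_le_sum_abs _ _
      _ ≤ ∑ j, Δ i j * |ξ j| := Finset.sum_le_sum fun j _ => by
            rw [abs_mul]
            exact mul_le_mul_of_nonneg_right (hE i j) (abs_nonneg _)
  · intro hv
    set s : Fin p → ℝ := Δ.mulVec fun j => |ξ j| with hs
    have hsnn : ∀ i, 0 ≤ s i := fun i => by
      simp only [hs, Matrix.mulVec, dotProduct]
      exact Finset.sum_nonneg fun j _ => mul_nonneg (hΔ i j) (abs_nonneg (ξ j))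
    refine ⟨fun i j => if s i = 0 then 0 else v i * Δ i j * Real.sign (ξ j) / s i, ?_, ?_⟩
    · intro i j
      by_cases h : s i = 0
      · simpa [h] using hΔ i j
      · have hspos : 0 < s i := lt_of_le_of_ne (hsnn i) (Ne.symm h)
        simp only [h, if_false]
        rw [abs_div, abs_mul, abs_mul, abs_of_pos hspos, abs_of_nonneg (hΔ i j), div_le_iff₀ hspos]
        calc |v i| * Δ i j * |Real.sign (ξ j)| ≤ s i * Δ i j * 1 := by
              apply mul_le_mul
              · exact mul_le_mul_of_nonneg_right (hv i) (hΔ i j)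
              · exact abs_sign_le_one _
              · exact abs_nonneg _
              · exact mul_nonneg (hsnn i) (hΔ i j)
          _ = Δ i j * s i := by ring
    · funext i
      simp only [Matrix.mulVec, dotProduct]
      by_cases h : s i = 0
      · have : |v i| ≤ 0 := (hv i).trans_eq h
        have hvi : v i = 0 := abs_nonpos_iff.mp this
        simp [h, hvi]
      · simp only [h, if_false]
        show _ = ∑ j, v i * Δ i j * Real.sign (ξ j) / s i * ξ j
        have : ∑ j, v i * Δ i j * Real.sign (ξ j) / s i * ξ j
            = (v i / s i) * ∑ j, Δ i j * (Real.sign (ξ j) * ξ j) := by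
          rw [Finset.mul_sum]; congr 1; ext j; ring
        rw [this]
        have hsum : ∑ j, Δ i j * (Real.sign (ξ j) * ξ j) = s i := by
          simp only [hs, Matrix.mulVec, dotProduct, sign_mul_self_eq_abs]
        rw [hsum, div_mul_cancel₀ _ h]
end

section
/- (Key inclusion in the proof of Theorem 1) Let Â_K ∈ ℝ^{n×n}, K ∈ ℝ^{m×n}, let Δ_S ∈ ℝ^{n×(n+m)} be entrywise nonnegative, set Δ_K = Δ_S · [I_n; |K|] ∈ ℝ^{n×n} (where [I_n; |K|] ∈ ℝ^{(n+m)×n} is the vertical stacking of the identity and |K|), and define F_j ∈ ℝ^{n×(n+m)} by F_0 = Δ_S and F_{j+1} = Δ_K Σ_{i=0}^{j} |Â_K^{j−i}| F_i for j ≥ 0, and set R_j = Σ_{i=0}^{j} |Â_K^{j−i}| F_i. Let M_K = [I_n; K] ∈ ℝ^{(n+m)×n} be the vertical stacking of the identity and K. Then for every j ≥ 1, every ξ ∈ ℝ^{n+m}, every δ ∈ ℝ^{n} with |δ| ≤ Δ_S|ξ| entrywise, and all matrices E_0, …, E_{j−1} ∈ ℝ^{n×(n+m)} with |E_i| ≤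 R_{j−1−i} entrywise, one has |Â_K^{j} δ + Σ_{i=0}^{j−1} E_i M_K Â_K^{i} δ| ≤ R_j |ξ| entrywise. -/
private lemma triangle_sum {M : Type*} [AddCommMonoid M] (f : ℕ → ℕ → M) :
    ∀ N, ∑ i ∈ Finset.range N, ∑ l ∈ Finset.range (N - i), f i l
      = ∑ t ∈ Finset.range N, ∑ i ∈ Finset.range (t + 1), f i (t - i) := by
  intro N
  induction N with
  | zero => simp
  | succ N ih =>
    rw [Finset.sum_range_succ (fun t => ∑ i ∈ Finset.range (t + 1), f i (t - i)), ← ih]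
    have h : ∀ i ∈ Finset.range (N + 1),
        ∑ l ∈ Finset.range (N + 1 - i), f i l
          = (∑ l ∈ Finset.range (N - i), f i l) + f i (N - i) := by
      intro i hi
      rw [show N + 1 - i = (N - i) + 1 by
        have := Finset.mem_range.mp hi; omega, Finset.sum_range_succ]
    rw [Finset.sum_congr rfl h, Finset.sum_add_distrib,
      Finset.sum_range_succ (fun i => ∑ l ∈ Finset.range (N - i), f i l)]
    simp [Nat.sub_self]

private lemma sum_mulVec {p q ι : Type*} [Fintype q] (s : Finset ι)
    (A : ι → Matrix p q ℝ) (v : q → ℝ) :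
    (∑ i ∈ s, A i).mulVec v = ∑ i ∈ s, (A i).mulVec v := by
  ext a
  simp only [Matrix.mulVec, dotProduct, Finset.sum_apply, Matrix.sum_apply,
    Finset.sum_mul]
  exact Finset.sum_comm

private lemma abs_mulVec_le {p q : Type*} [Fintype q] (M Mb : Matrix p q ℝ) (x xb : q → ℝ)
    (hM : ∀ a b, |M a b| ≤ Mb a b) (hx : ∀ b, |x b| ≤ xb b) (a : p) :
    |M.mulVec x a| ≤ Mb.mulVec xb a := by
  calc |M.mulVec x a| ≤ ∑ b, |M a b * x b| := Finset.abs_sum_le_sum_abs _ _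
    _ ≤ ∑ b, Mb a b * xb b := by
        apply Finset.sum_le_sum
        intro b _
        rw [abs_mul]
        exact mul_le_mul (hM a b) (hx b) (abs_nonneg _) ((abs_nonneg _).trans (hM a b))
    _ = Mb.mulVec xb a := rfl

private lemma key_id {n q : Type*} [Fintype n] [Fintype q]
    (P : ℕ → Matrix n n ℝ) (ΔS : Matrix n q ℝ) (G : Matrix q n ℝ)
    (R : ℕ → Matrix n q ℝ)
    (hRrec : ∀ j, R j = P j * ΔS + ∑ l ∈ Finset.range j, P (j - 1 - l) * ((ΔS * G) * R l)) :
    ∀ j, ∑ i ∈ Finset.range j, R (j - 1 - i) * (G * (P i * ΔS))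
       = ∑ l ∈ Finset.range j, P (j - 1 - l) * ((ΔS * G) * R l) := by
  intro j
  induction j using Nat.strong_induction_on with
  | _ j ih =>
    rcases j with _ | N
    · simp
    · simp only [Nat.add_sub_cancel]
      have hLHS :
          ∑ i ∈ Finset.range (N + 1), R (N - i) * (G * (P i * ΔS))
            = (∑ i ∈ Finset.range (N + 1), P (N - i) * ΔS * (G * (P i * ΔS)))
              + ∑ i ∈ Finset.range (N + 1), ∑ l ∈ Finset.range (N - i),
                  P (N - i - 1 - l) * ((ΔS * G) * R l) * (G * (P i * ΔS)) := by
        rw [← Finset.sum_add_distrib]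
        apply Finset.sum_congr rfl
        intro i _
        rw [hRrec (N - i), Matrix.add_mul, Matrix.sum_mul]
      have hRHS :
          ∑ l ∈ Finset.range (N + 1), P (N - l) * ((ΔS * G) * R l)
            = (∑ l ∈ Finset.range (N + 1), P (N - l) * ((ΔS * G) * (P l * ΔS)))
              + ∑ l ∈ Finset.range (N + 1), P (N - l) *
                  ((ΔS * G) * ∑ i ∈ Finset.range l, P (l - 1 - i) * ((ΔS * G) * R i)) := by
        rw [← Finset.sum_add_distrib]
        apply Finset.sum_congr rfl
        intro l _
        rw [hRrec l, Matrix.mul_add, Matrix.mul_add]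
      rw [hLHS, hRHS]
      congr 1
      · apply Finset.sum_congr rfl
        intro i _
        simp only [Matrix.mul_assoc]
      · -- double sums
        have hd1 : ∑ i ∈ Finset.range (N + 1), ∑ l ∈ Finset.range (N - i),
              P (N - i - 1 - l) * ((ΔS * G) * R l) * (G * (P i * ΔS))
            = ∑ i ∈ Finset.range N, ∑ l ∈ Finset.range (N - i),
              P (N - i - 1 - l) * ((ΔS * G) * R l) * (G * (P i * ΔS)) := by
          rw [Finset.sum_range_succ]
          simp [Nat.sub_self]
        rw [hd1, triangle_sum (fun i l => P (N - i - 1 - l) * ((ΔS * G) * R l) * (G * (P i * ΔS))) N]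
        rw [Finset.sum_range_succ' (fun l => P (N - l) *
              ((ΔS * G) * ∑ i ∈ Finset.range l, P (l - 1 - i) * ((ΔS * G) * R i)))]
        simp only [Finset.range_zero, Finset.sum_empty, Matrix.mul_zero, add_zero,
          Nat.sub_zero, Nat.add_sub_cancel]
        apply Finset.sum_congr rfl
        intro t ht
        have ht' : t < N := Finset.mem_range.mp ht
        have e1 : ∀ i ∈ Finset.range (t + 1),
            P (N - i - 1 - (t - i)) * ((ΔS * G) * R (t - i)) * (G * (P i * ΔS))
              = P (N - 1 - t) * ((ΔS * G) * (R (t - i) * (G * (P i * ΔS)))) := by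
          intro i hi
          have hi' : i < t + 1 := Finset.mem_range.mp hi
          rw [show N - i - 1 - (t - i) = N - 1 - t by omega,
            Matrix.mul_assoc (P (N - 1 - t)), Matrix.mul_assoc (ΔS * G)]
        rw [Finset.sum_congr rfl e1, ← Matrix.mul_sum, ← Matrix.mul_sum]
        have h := ih (t + 1) (by omega)
        simp only [Nat.add_sub_cancel] at h
        rw [h, show N - (t + 1) = N - 1 - t by omega]

/-- (Key inclusion in the proof of Theorem 1) With `Δ_K = Δ_S [I; |K|]`,
`F 0 = Δ_S`, `F (j+1) = Δ_K Σ_{i=0}^{j} |Ahat_K^{j−i}| F i`,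
`R j = Σ_{i=0}^{j} |Ahat_K^{j−i}| F i` and `M_K = [I; K]`, for every `j ≥ 1`, every
`ξ`, every `δ` with `|δ| ≤ Δ_S|ξ|` and all `E₀, …, E_{j−1}` with
`|Eᵢ| ≤ R (j−1−i)` entrywise, one has
`|Ahat_K^j δ + Σ_{i=0}^{j−1} Eᵢ M_K Ahat_K^i δ| ≤ R j |ξ|` entrywise. -/
theorem key_inclusion_theorem1 {n m : ℕ}
    (AhatK : Matrix (Fin n) (Fin n) ℝ) (K : Matrix (Fin m) (Fin n) ℝ)
    (ΔS : Matrix (Fin n) (Fin n ⊕ Fin m) ℝ) (hΔS : ∀ i j, 0 ≤ ΔS i j)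
    (ΔK : Matrix (Fin n) (Fin n) ℝ)
    (hΔK : ΔK = ΔS * Matrix.fromRows (1 : Matrix (Fin n) (Fin n) ℝ) (eabs K))
    (F : ℕ → Matrix (Fin n) (Fin n ⊕ Fin m) ℝ)
    (hF0 : F 0 = ΔS)
    (hFs : ∀ j, F (j + 1) = ΔK * ∑ i ∈ Finset.range (j + 1), eabs (AhatK ^ (j - i)) * F i)
    (R : ℕ → Matrix (Fin n) (Fin n ⊕ Fin m) ℝ)
    (hR : ∀ j, R j = ∑ i ∈ Finset.range (j + 1), eabs (AhatK ^ (j - i)) * F i)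
    (MK : Matrix (Fin n ⊕ Fin m) (Fin n) ℝ)
    (hMK : MK = Matrix.fromRows (1 : Matrix (Fin n) (Fin n) ℝ) K) :
    ∀ j, 1 ≤ j → ∀ (ξ : Fin n ⊕ Fin m → ℝ) (δ : Fin n → ℝ),
      (∀ a, |δ a| ≤ (ΔS.mulVec fun c => |ξ c|) a) →
      ∀ E : ℕ → Matrix (Fin n) (Fin n ⊕ Fin m) ℝ,
        (∀ i, i < j → ∀ a c, |E i a c| ≤ R (j - 1 - i) a c) →
        ∀ a, |((AhatK ^ j).mulVec δ
                + ∑ i ∈ Finset.range j, (E i * MK * AhatK ^ i).mulVec δ) a|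
          ≤ ((R j).mulVec fun c => |ξ c|) a := by
  intro j hj ξ δ hδ E hE a
  set v : Fin n ⊕ Fin m → ℝ := fun c => |ξ c| with hv
  set P : ℕ → Matrix (Fin n) (Fin n) ℝ := fun p => eabs (AhatK ^ p) with hP
  set G : Matrix (Fin n ⊕ Fin m) (Fin n) ℝ :=
    Matrix.fromRows (1 : Matrix (Fin n) (Fin n) ℝ) (eabs K) with hG
  -- the recursion for R
  have hRrec : ∀ j, R j = P j * ΔS + ∑ l ∈ Finset.range j, P (j - 1 - l) * ((ΔS * G) * R l) := by
    intro j
    rw [hR j, Finset.sum_range_succ'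
      (fun i => eabs (AhatK ^ (j - i)) * F i)]
    rw [Nat.sub_zero, hF0, add_comm]
    congr 1
    apply Finset.sum_congr rfl
    intro i _
    rw [hFs i, ← hR i, show j - (i + 1) = j - 1 - i by omega, ← hΔK]
  -- entrywise bounds
  have h1 : ∀ i a, |(AhatK ^ i).mulVec δ a| ≤ ((P i * ΔS).mulVec v) a := by
    intro i a
    rw [← Matrix.mulVec_mulVec]
    exact abs_mulVec_le _ (P i) _ (ΔS.mulVec v) (fun a b => le_of_eq rfl) hδ a
  have hMKG : ∀ a b, |MK a b| ≤ G a b := by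
    intro a b
    rcases a with a | a
    · rw [hMK, hG]
      simp only [Matrix.fromRows_apply_inl, Matrix.one_apply]
      split_ifs <;> simp
    · rw [hMK, hG]
      simp only [Matrix.fromRows_apply_inr]
      exact le_of_eq rfl
  have h2 : ∀ i c, |((MK * AhatK ^ i).mulVec δ) c| ≤ ((G * (P i * ΔS)).mulVec v) c := by
    intro i c
    rw [← Matrix.mulVec_mulVec, ← Matrix.mulVec_mulVec]
    exact abs_mulVec_le MK G _ ((P i * ΔS).mulVec v) hMKG (h1 i) c
  have h3 : ∀ i, i < j → ∀ a,
      |((E i * MK * AhatK ^ i).mulVec δ) a|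
        ≤ ((R (j - 1 - i) * (G * (P i * ΔS))).mulVec v) a := by
    intro i hi a
    rw [Matrix.mul_assoc, ← Matrix.mulVec_mulVec]
    refine le_trans
      (abs_mulVec_le (E i) (R (j - 1 - i)) _ ((G * (P i * ΔS)).mulVec v) (hE i hi) (h2 i) a)
      (le_of_eq ?_)
    rw [Matrix.mulVec_mulVec]
  calc |((AhatK ^ j).mulVec δ + ∑ i ∈ Finset.range j, (E i * MK * AhatK ^ i).mulVec δ) a|
      = |(AhatK ^ j).mulVec δ a + ∑ i ∈ Finset.range j, ((E i * MK * AhatK ^ i).mulVec δ) a| := by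
        rw [Pi.add_apply, Finset.sum_apply]
    _ ≤ |(AhatK ^ j).mulVec δ a| + |∑ i ∈ Finset.range j, ((E i * MK * AhatK ^ i).mulVec δ) a| :=
        abs_add_le _ _
    _ ≤ |(AhatK ^ j).mulVec δ a|
          + ∑ i ∈ Finset.range j, |((E i * MK * AhatK ^ i).mulVec δ) a| := by
        gcongr
        exact Finset.abs_sum_le_sum_abs _ _
    _ ≤ ((P j * ΔS).mulVec v) a
          + ∑ i ∈ Finset.range j, ((R (j - 1 - i) * (G * (P i * ΔS))).mulVec v) a :=
        add_le_add (h1 j a)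
          (Finset.sum_le_sum fun i hi => h3 i (Finset.mem_range.mp hi) a)
    _ = ((P j * ΔS + ∑ i ∈ Finset.range j, R (j - 1 - i) * (G * (P i * ΔS))).mulVec v) a := by
        rw [Matrix.add_mulVec, sum_mulVec, Pi.add_apply, Finset.sum_apply]
    _ = ((R j).mulVec v) a := by
        rw [key_id P ΔS G R hRrec j, ← hRrec j]
end

section
/- Let Â_K ∈ ℝ^{n×n} and let Δ_K ∈ ℝ^{n×n} and Δ_S ∈ ℝ^{n×(n+m)} be entrywise nonnegative. Define F_j ∈ ℝ^{n×(n+m)} by F_0 = Δ_S and F_{j+1} = Δ_K Σ_{i=0}^{j} |Â_K^{j−i}| F_i for j ≥ 0, and define P_j ∈ ℝ^{n×n} by P_1 = I_n and P_{j+1} = |Â_K^{j}| + Σ_{h=1}^{j} P_h Δ_K |Â_K^{j−h}| for j ≥ 1. Then for every j ≥ 0, the quantity R_j = Σ_{i=0}^{j} |Â_K^{j−i}| F_i satisfies R_j = |Â_K^{j}| Δ_S + Σ_{i=1}^{j} |Â_K^{j−i}| Δ_K P_i Δ_S. -/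
/-- If `r = r * q` with `q` of zero constant term, then `r = 0`. -/
lemma ps_fixed_zero {S : Type*} [Ring S] (r q : PowerSeries S)
    (hq : PowerSeries.constantCoeff q = 0) (h : r = r * q) : r = 0 := by
  have key : ∀ j, PowerSeries.coeff j r = 0 := by
    intro j
    induction j using Nat.strong_induction_on with
    | _ j ih =>
      conv_lhs => rw [h]
      rw [PowerSeries.coeff_mul, Finset.Nat.sum_antidiagonal_eq_sum_range_succ_mk]
      apply Finset.sum_eq_zero
      intro k hk
      rcases eq_or_lt_of_le (Finset.mem_range_succ_iff.mp hk) with hkj | hkj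
      · have h0 : j - k = 0 := by omega
        have : (PowerSeries.coeff (k, j - k).2) q = 0 := by
          simp only [h0]; rwa [PowerSeries.coeff_zero_eq_constantCoeff]
        rw [this, mul_zero]
      · rw [ih k hkj, zero_mul]
  ext j; rw [key j, map_zero]

/-- Mirror form of the fixed-point equation. -/
lemma ps_mirror {S : Type*} [Ring S] (p xb dd : PowerSeries S)
    (hq0 : PowerSeries.constantCoeff (dd * xb) = 0)
    (hp : p = xb + p * (dd * xb)) : p = xb + (xb * dd) * p := by
  have hs : p * (dd * xb) - (xb * dd) * p
      = (p * (dd * xb) - (xb * dd) * p) * (dd * xb) := by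
    conv_lhs => rw [hp]
    noncomm_ring
  have key : p * (dd * xb) = (xb * dd) * p :=
    sub_eq_zero.mp (ps_fixed_zero _ _ hq0 hs)
  rw [← key]; exact hp

/-- With `F 0 = Δ_S`, `F (j+1) = Δ_K Σ_{i=0}^{j} |Ahat_K^{j−i}| F i`, `P 1 = I` and
`P (j+1) = |Ahat_K^j| + Σ_{h=1}^{j} P h Δ_K |Ahat_K^{j−h}|` for `j ≥ 1`, the quantity
`R j = Σ_{i=0}^{j} |Ahat_K^{j−i}| F i` satisfies
`R j = |Ahat_K^j| Δ_S + Σ_{i=1}^{j} |Ahat_K^{j−i}| Δ_K P i Δ_S` for every `j ≥ 0`. -/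
theorem R_closed_form {n m : ℕ}
    (AhatK ΔK : Matrix (Fin n) (Fin n) ℝ) (ΔS : Matrix (Fin n) (Fin (n + m)) ℝ)
    (hΔK : ∀ i j, 0 ≤ ΔK i j) (hΔS : ∀ i j, 0 ≤ ΔS i j)
    (F : ℕ → Matrix (Fin n) (Fin (n + m)) ℝ)
    (hF0 : F 0 = ΔS)
    (hFs : ∀ j, F (j + 1) = ΔK * ∑ i ∈ Finset.range (j + 1), eabs (AhatK ^ (j - i)) * F i)
    (P : ℕ → Matrix (Fin n) (Fin n) ℝ)
    (hP1 : P 1 = 1)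
    (hPs : ∀ j, 1 ≤ j →
      P (j + 1) = eabs (AhatK ^ j) + ∑ h ∈ Finset.Icc 1 j, P h * ΔK * eabs (AhatK ^ (j - h)))
    (R : ℕ → Matrix (Fin n) (Fin (n + m)) ℝ)
    (hR : ∀ j, R j = ∑ i ∈ Finset.range (j + 1), eabs (AhatK ^ (j - i)) * F i) :
    ∀ j, R j = eabs (AhatK ^ j) * ΔS
      + ∑ i ∈ Finset.Icc 1 j, eabs (AhatK ^ (j - i)) * ΔK * P i * ΔS := by
  classical
  set B : ℕ → Matrix (Fin n) (Fin n) ℝ := fun j => eabs (AhatK ^ j) with hBdef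
  have hB0' : eabs (1 : Matrix (Fin n) (Fin n) ℝ) = 1 := by
    funext i j
    simp only [eabs, Matrix.one_apply]
    split_ifs <;> simp
  have hB0 : B 0 = 1 := by
    simp only [hBdef]; rw [pow_zero, hB0']
  set b : PowerSeries (Matrix (Fin n) (Fin n) ℝ) := PowerSeries.mk B with hbdef
  set d : PowerSeries (Matrix (Fin n) (Fin n) ℝ) :=
    PowerSeries.C ΔK with hddef
  set p : PowerSeries (Matrix (Fin n) (Fin n) ℝ) :=
    PowerSeries.mk (fun j => if j = 0 then 0 else P j) with hpdef
  have hp0 : PowerSeries.constantCoeff p = 0 := by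
    rw [hpdef, PowerSeries.constantCoeff_mk]; simp
  have hXb0 : PowerSeries.constantCoeff (PowerSeries.X * b) = 0 := by
    rw [map_mul, PowerSeries.constantCoeff_X, zero_mul]
  have coeff_q : ∀ k, PowerSeries.coeff k (d * (PowerSeries.X * b))
      = if k = 0 then 0 else ΔK * B (k - 1) := by
    intro k
    rw [PowerSeries.coeff_C_mul]
    cases k with
    | zero =>
      rw [PowerSeries.coeff_zero_eq_constantCoeff, hXb0, mul_zero]; simp
    | succ k => rw [PowerSeries.coeff_succ_X_mul, PowerSeries.coeff_mk]; simp
  have coeff_q' : ∀ k, PowerSeries.coeff k ((PowerSeries.X * b) * d)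
      = if k = 0 then 0 else B (k - 1) * ΔK := by
    intro k
    rw [PowerSeries.coeff_mul_C]
    cases k with
    | zero =>
      rw [PowerSeries.coeff_zero_eq_constantCoeff, hXb0, zero_mul]; simp
    | succ k => rw [PowerSeries.coeff_succ_X_mul, PowerSeries.coeff_mk]; simp
  have coeff_p : ∀ k, PowerSeries.coeff k p = if k = 0 then 0 else P k := by
    intro k; rw [hpdef, PowerSeries.coeff_mk]
  have hp : p = PowerSeries.X * b + p * (d * (PowerSeries.X * b)) := by
    apply PowerSeries.ext; intro j
    cases j with
    | zero =>
      rw [map_add, PowerSeries.coeff_zero_eq_constantCoeff_apply,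
        PowerSeries.coeff_zero_eq_constantCoeff_apply, PowerSeries.coeff_zero_eq_constantCoeff_apply,
        hp0, hXb0, map_mul, hp0, zero_mul, add_zero]
    | succ j =>
      have hXb : PowerSeries.coeff (j + 1) (PowerSeries.X * b) = B j := by
        rw [PowerSeries.coeff_succ_X_mul, hbdef, PowerSeries.coeff_mk]
      have hmul : PowerSeries.coeff (j + 1) (p * (d * (PowerSeries.X * b)))
          = ∑ i ∈ Finset.range j, P (i + 1) * ΔK * B (j - (i + 1)) := by
        rw [PowerSeries.coeff_mul, Finset.Nat.sum_antidiagonal_eq_sum_range_succ_mk,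
          Finset.sum_range_succ, Finset.sum_range_succ']
        simp only [coeff_p, coeff_q]
        simp [Nat.sub_self]
        apply Finset.sum_congr rfl
        intro i hi
        have hi' : i < j := Finset.mem_range.mp hi
        rw [if_neg (by omega : ¬ j - i = 0)]
        have e : j - i - 1 = j - (i + 1) := by omega
        rw [e, mul_assoc]
      rw [map_add, hXb, hmul, coeff_p, if_neg (Nat.succ_ne_zero _)]
      rcases Nat.eq_zero_or_pos j with hj | hj
      · subst hj; simp [hP1, hB0]
      · rw [hPs j hj, ← Finset.Ico_add_one_right_eq_Icc, Finset.sum_Ico_eq_sum_range]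
        congr 1
        apply Finset.sum_congr (by norm_num)
        intro i _
        have e : 1 + i = i + 1 := by omega
        rw [e]
  have hq0 : PowerSeries.constantCoeff (d * (PowerSeries.X * b)) = 0 := by
    rw [map_mul, hXb0, mul_zero]
  have hp' : p = PowerSeries.X * b + ((PowerSeries.X * b) * d) * p :=
    ps_mirror p (PowerSeries.X * b) d hq0 hp
  -- mirror recursion for P
  have mirror : ∀ j, P (j + 1) = B j + ∑ i ∈ Finset.Icc 1 j, B (j - i) * ΔK * P i := by
    intro j
    have hc := congrArg (PowerSeries.coeff (j + 1)) hp'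
    rw [map_add, coeff_p, if_neg (Nat.succ_ne_zero _), PowerSeries.coeff_succ_X_mul,
      hbdef, PowerSeries.coeff_mk, PowerSeries.coeff_mul,
      Finset.Nat.sum_antidiagonal_eq_sum_range_succ_mk,
      Finset.sum_range_succ, Finset.sum_range_succ'] at hc
    simp only [coeff_p, coeff_q'] at hc
    simp [Nat.sub_self] at hc
    rw [hc]
    congr 1
    rw [← Finset.Ico_add_one_right_eq_Icc, Finset.sum_Ico_eq_sum_range]
    conv_lhs => rw [← Finset.sum_range_reflect]
    apply Finset.sum_congr (by norm_num)
    intro i hi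
    have hi' : i < j + 1 - 1 := Finset.mem_range.mp hi
    rw [if_neg (by omega : ¬ j - (j - 1 - i) = 0)]
    have e1 : j - 1 - i = j - (1 + i) := by omega
    rw [e1]
    have e3 : j - (j - (1 + i)) = 1 + i := by omega
    rw [e3]
    rw [← hbdef, coeff_q', if_neg (by omega), Nat.add_sub_cancel]
  -- main strong induction: R j = P (j+1) * ΔS
  have hF : ∀ i, F (i + 1) = ΔK * R i := by
    intro i; rw [hFs, ← hR]
  have RP : ∀ j, R j = P (j + 1) * ΔS := by
    intro j
    induction j using Nat.strong_induction_on with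
    | _ j ih =>
      cases j with
      | zero =>
        rw [hR]
        simp [hF0, hB0', hP1]
      | succ j =>
        rw [hR, Finset.sum_range_succ']
        have hsum : ∀ i ∈ Finset.range (j + 1),
            eabs (AhatK ^ (j + 1 - (i + 1))) * F (i + 1)
            = B (j - i) * (ΔK * (P (i + 1) * ΔS)) := by
          intro i hi
          have hi' : i < j + 1 := Finset.mem_range.mp hi
          rw [hF, ih i (by omega)]
          have : j + 1 - (i + 1) = j - i := by omega
          rw [this]
        rw [Finset.sum_congr rfl hsum, hF0, Nat.sub_zero]
        rw [mirror (j + 1), Matrix.add_mul, Matrix.sum_mul]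
        rw [add_comm (∑ x ∈ Finset.range (j + 1), B (j - x) * (ΔK * (P (x + 1) * ΔS)))
          (eabs (AhatK ^ (j + 1)) * ΔS)]
        congr 1
        rw [← Finset.Ico_add_one_right_eq_Icc, Finset.sum_Ico_eq_sum_range]
        apply Finset.sum_congr (by congr 1)
        intro i hi
        have hi' : i < j + 1 := Finset.mem_range.mp hi
        have e1 : j + 1 - (1 + i) = j - i := by omega
        have e2 : 1 + i = i + 1 := by omega
        rw [e1, e2, Matrix.mul_assoc, Matrix.mul_assoc]
  intro j
  rw [RP j, mirror j, Matrix.add_mul, Matrix.sum_mul]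
end
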